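/- For any η₁, η₂ ∈ ℝ, each of the two components of the function f(x) = ( x e^{η₁} / (x e^{η₁} + (1−x) e^{η₂}), (1−x) e^{η₂} / (x e^{η₁} + (1−x) e^{η₂}) ) is Lipschitz continuous on [0,1] with Lipschitz constant e^{|η₁−η₂|}. -/

import Mathlib

/-- for any `η₁ η₂ ∈ ℝ`, both components of
`f(x) = (x e^{η₁} / (x e^{η₁} + (1-x) e^{η₂}), (1-x) e^{η₂} / (x e^{η₁} + (1-x) e^{η₂}))`
are Lipschitz on `[0,1]` with constant `e^{|η₁-η₂|}`. -/
theorem f_lipschitz (η₁ η₂ : ℝ) (x y : ℝ)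
    (hx : x ∈ Set.Icc (0 : ℝ) 1) (hy : y ∈ Set.Icc (0 : ℝ) 1) :
    |x * Real.exp η₁ / (x * Real.exp η₁ + (1 - x) * Real.exp η₂) -
      y * Real.exp η₁ / (y * Real.exp η₁ + (1 - y) * Real.exp η₂)| ≤
      Real.exp |η₁ - η₂| * |x - y| ∧
    |(1 - x) * Real.exp η₂ / (x * Real.exp η₁ + (1 - x) * Real.exp η₂) -
      (1 - y) * Real.exp η₂ / (y * Real.exp η₁ + (1 - y) * Real.exp η₂)| ≤
      Real.exp |η₁ - η₂| * |x - y| := by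
  obtain ⟨hx0, hx1⟩ := hx
  obtain ⟨hy0, hy1⟩ := hy
  set A := Real.exp η₁ with hA
  set B := Real.exp η₂ with hB
  have hApos : 0 < A := Real.exp_pos _
  have hBpos : 0 < B := Real.exp_pos _
  set m := min A B with hm
  have hmpos : 0 < m := lt_min hApos hBpos
  have hmA : m ≤ A := min_le_left _ _
  have hmB : m ≤ B := min_le_right _ _
  have hDx : m ≤ x * A + (1 - x) * B := by nlinarith
  have hDy : m ≤ y * A + (1 - y) * B := by nlinarith
  have hDxpos : 0 < x * A + (1 - x) * B := hmpos.trans_le hDx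
  have hDypos : 0 < y * A + (1 - y) * B := hmpos.trans_le hDy
  have hexp : Real.exp |η₁ - η₂| * (m * m) = A * B := by
    rcases le_total η₁ η₂ with h | h
    · have hAB : A ≤ B := Real.exp_le_exp.2 h
      rw [abs_of_nonpos (by linarith), hm, min_eq_left hAB, hA, hB, ← Real.exp_add,
        ← Real.exp_add, ← Real.exp_add]
      ring_nf
    · have hAB : B ≤ A := Real.exp_le_exp.2 h
      rw [abs_of_nonneg (by linarith), hm, min_eq_right hAB, hA, hB, ← Real.exp_add,
        ← Real.exp_add, ← Real.exp_add]
      ring_nf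
  have hbound : |A * B * (x - y) / ((x * A + (1 - x) * B) * (y * A + (1 - y) * B))| ≤
      Real.exp |η₁ - η₂| * |x - y| := by
    rw [abs_div, abs_mul, abs_mul, abs_of_pos hApos, abs_of_pos hBpos,
      abs_of_pos (mul_pos hDxpos hDypos), div_le_iff₀ (mul_pos hDxpos hDypos)]
    have hABle : A * B ≤ Real.exp |η₁ - η₂| * ((x * A + (1 - x) * B) * (y * A + (1 - y) * B)) := by
      calc A * B = Real.exp |η₁ - η₂| * (m * m) := hexp.symm
      _ ≤ Real.exp |η₁ - η₂| * ((x * A + (1 - x) * B) * (y * A + (1 - y) * B)) :=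
          mul_le_mul_of_nonneg_left
            (mul_le_mul hDx hDy hmpos.le (by positivity)) (Real.exp_pos _).le
    nlinarith [abs_nonneg (x - y)]
  have key1 : x * A / (x * A + (1 - x) * B) - y * A / (y * A + (1 - y) * B) =
      A * B * (x - y) / ((x * A + (1 - x) * B) * (y * A + (1 - y) * B)) := by
    rw [div_sub_div _ _ hDxpos.ne' hDypos.ne']; congr 1
    ring
  have key2 : (1 - x) * B / (x * A + (1 - x) * B) - (1 - y) * B / (y * A + (1 - y) * B) =
      -(A * B * (x - y) / ((x * A + (1 - x) * B) * (y * A + (1 - y) * B))) := by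
    rw [div_sub_div _ _ hDxpos.ne' hDypos.ne', ← neg_div]; congr 1
    ring
  constructor
  · rw [key1]; exact hbound
  · rw [key2, abs_neg]; exact hbound
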